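/- Let F be a finite field and A ⊆ F with |A| = n. Let 𝒜 be a partition of A into blocks of size r+1 and 𝒜' a partition of A into blocks of size s+1, and assume 𝒜 and 𝒜' are orthogonal. Let V_m = ℱ_𝒜^r ∩ ℱ_{𝒜'}^s ∩ P_m, where P_m is the space of polynomials of degree < m, let Φ : F^k → V_m be an injective map, f_a = Φ(a), and C = {(f_a(α))_{α∈A} : a ∈ F^k}. Then the minimum Hamming distance of C is at least n − m + 1, and for every a ∈ F^k and every α ∈ A: f_a agrees on the 𝒜-block containing α with a polynomial of degree ≤ r−1, and f_a agrees on the 𝒜'-block containing α with a polynomial of degree ≤ s−1; consequently every symbol has two disjoint recovering sets of sizes r and s. -/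

import Mathlib

open Polynomial

lemma my_vanish {F : Type*} [Field F] (g : Polynomial F) (S : Finset F)
    (hd : g.degree < (S.card : ℕ)) (h : ∀ x ∈ S, g.eval x = 0) : g = 0 := by
  by_cases hg : g = 0
  · exact hg
  · refine Polynomial.eq_zero_of_natDegree_lt_card_of_eval_eq_zero' g S h ?_
    exact_mod_cast (Polynomial.degree_eq_natDegree hg ▸ hd)

-- helper: block polynomial
lemma my_block {F : Type*} [Field F] (g : Polynomial F) (r : ℕ) (fc : Fin r → Polynomial F)
    (S : Finset F) (hc : ∀ i, ∀ α ∈ S, ∀ β ∈ S, (fc i).eval α = (fc i).eval β)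
    (hg : g = ∑ i, fc i * X ^ (i : ℕ)) :
    ∃ δ : Polynomial F, δ.degree < (r : ℕ) ∧ ∀ β ∈ S, δ.eval β = g.eval β := by
  rcases S.eq_empty_or_nonempty with hS | ⟨α₀, hα₀⟩
  · exact ⟨0, by simp [hS, Polynomial.degree_zero], by simp [hS]⟩
  · refine ⟨∑ i : Fin r, C ((fc i).eval α₀) * X ^ (i : ℕ), ?_, ?_⟩
    · refine lt_of_le_of_lt (Polynomial.degree_sum_le _ _) ?_
      refine (Finset.sup_lt_iff (by exact WithBot.bot_lt_coe (r:ℕ))).mpr ?_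
      intro i _
      refine lt_of_le_of_lt (Polynomial.degree_C_mul_X_pow_le _ _) ?_
      exact_mod_cast i.2
    · intro β hβ
      simp only [hg, Polynomial.eval_finset_sum, Polynomial.eval_mul, Polynomial.eval_pow,
        Polynomial.eval_C, Polynomial.eval_X]
      exact Finset.sum_congr rfl fun i _ => by rw [hc i α₀ hα₀ β hβ]

lemma my_recover {F : Type*} [Field F] [DecidableEq F] (r : ℕ) (S : Finset F) (hS : S.card = r + 1)
    (α : F) (hα : α ∈ S) (p q : Polynomial F)
    (hp : ∃ δ : Polynomial F, δ.degree < (r : ℕ) ∧ ∀ β ∈ S, δ.eval β = p.eval β)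
    (hq : ∃ δ : Polynomial F, δ.degree < (r : ℕ) ∧ ∀ β ∈ S, δ.eval β = q.eval β)
    (hagree : ∀ β ∈ S.erase α, p.eval β = q.eval β) :
    p.eval α = q.eval α := by
  obtain ⟨δa, hda, ha⟩ := hp
  obtain ⟨δb, hdb, hb⟩ := hq
  have hcard : (S.erase α).card = r := by rw [Finset.card_erase_of_mem hα, hS]; omega
  have hz : δa - δb = 0 := by
    refine my_vanish _ (S.erase α) ?_ ?_
    · rw [hcard]
      exact lt_of_le_of_lt (Polynomial.degree_sub_le _ _) (max_lt hda hdb)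
    · intro x hx
      have hxS : x ∈ S := Finset.mem_of_mem_erase hx
      simp only [Polynomial.eval_sub, ha x hxS, hb x hxS, hagree x hx, sub_self]
  have := sub_eq_zero.mp hz
  rw [← ha α hα, ← hb α hα, this]


/-- LRC codes with two disjoint recovering sets from orthogonal partitions: let `𝒜` (blocks
`B i`, size `r+1`) and `𝒜'` (blocks `B' j`, size `s+1`) be orthogonal partitions of `A`,
`|A| = n`, and let `Φ : F^k → V_m = ℱ_𝒜^r ∩ ℱ_{𝒜'}^s ∩ P_m` be injective.  Then the code
`{(Φa(α))_{α ∈ A}}` has minimum distance `≥ n - m + 1`, on each `𝒜`-block `Φ a` agrees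
with a polynomial of degree `≤ r-1`, on each `𝒜'`-block with one of degree `≤ s-1`, and
every symbol has two disjoint recovering sets of sizes `r` and `s`. -/
theorem stmt_14 {F : Type*} [Field F] [Fintype F] [DecidableEq F]
    (n r s k m : ℕ) (m₁ m₂ : ℕ)
    (A : Finset F) (hA : A.card = n)
    (B : Fin m₁ → Finset F) (B' : Fin m₂ → Finset F)
    (hBcard : ∀ i, (B i).card = r + 1) (hB'card : ∀ j, (B' j).card = s + 1)
    (hBdisj : ∀ i j, i ≠ j → Disjoint (B i) (B j))
    (hB'disj : ∀ i j, i ≠ j → Disjoint (B' i) (B' j))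
    (hBunion : Finset.univ.biUnion B = A)
    (hB'union : Finset.univ.biUnion B' = A)
    (horth : ∀ i j, ((B i) ∩ (B' j)).card ≤ 1)
    (Φ : (Fin k → F) → Polynomial F) (hΦinj : Function.Injective Φ)
    (hΦ₁ : ∀ a, ∃ fc : Fin r → Polynomial F,
      (∀ i, (fc i).degree < (A.card : WithBot ℕ) ∧
        ∀ l, ∀ α ∈ B l, ∀ β ∈ B l, (fc i).eval α = (fc i).eval β) ∧
      Φ a = ∑ i : Fin r, fc i * X ^ (i : ℕ))
    (hΦ₂ : ∀ a, ∃ fc : Fin s → Polynomial F,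
      (∀ i, (fc i).degree < (A.card : WithBot ℕ) ∧
        ∀ l, ∀ α ∈ B' l, ∀ β ∈ B' l, (fc i).eval α = (fc i).eval β) ∧
      Φ a = ∑ i : Fin s, fc i * X ^ (i : ℕ))
    (hΦdeg : ∀ a, (Φ a).degree < (m : WithBot ℕ)) :
    (∀ a b : Fin k → F, a ≠ b →
      (n : ℤ) - (m : ℤ) + 1 ≤
        (hammingDist (fun α : ↥A => (Φ a).eval (α : F))
          (fun α : ↥A => (Φ b).eval (α : F)) : ℤ)) ∧
    (∀ a : Fin k → F, ∀ i, ∃ δ : Polynomial F, δ.degree < (r : ℕ) ∧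
        ∀ β ∈ B i, δ.eval β = (Φ a).eval β) ∧
    (∀ a : Fin k → F, ∀ j, ∃ δ : Polynomial F, δ.degree < (s : ℕ) ∧
        ∀ β ∈ B' j, δ.eval β = (Φ a).eval β) ∧
    (∀ α ∈ A, ∃ i j, α ∈ B i ∧ α ∈ B' j ∧
      Disjoint ((B i).erase α) ((B' j).erase α) ∧
      ((B i).erase α).card = r ∧ ((B' j).erase α).card = s ∧
      (∀ a b : Fin k → F,
        (∀ β ∈ (B i).erase α, (Φ a).eval β = (Φ b).eval β) →
        (Φ a).eval α = (Φ b).eval α) ∧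
      (∀ a b : Fin k → F,
        (∀ β ∈ (B' j).erase α, (Φ a).eval β = (Φ b).eval β) →
        (Φ a).eval α = (Φ b).eval α)) := by
  have hloc1 : ∀ a : Fin k → F, ∀ i, ∃ δ : Polynomial F, δ.degree < (r : ℕ) ∧
      ∀ β ∈ B i, δ.eval β = (Φ a).eval β := by
    intro a i
    obtain ⟨fc, hfc, hsum⟩ := hΦ₁ a
    exact my_block (Φ a) r fc (B i) (fun t α hα β hβ => (hfc t).2 i α hα β hβ) hsum
  have hloc2 : ∀ a : Fin k → F, ∀ j, ∃ δ : Polynomial F, δ.degree < (s : ℕ) ∧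
      ∀ β ∈ B' j, δ.eval β = (Φ a).eval β := by
    intro a j
    obtain ⟨fc, hfc, hsum⟩ := hΦ₂ a
    exact my_block (Φ a) s fc (B' j) (fun t α hα β hβ => (hfc t).2 j α hα β hβ) hsum
  refine ⟨?_, hloc1, hloc2, ?_⟩
  · intro a b hab
    set g := Φ a - Φ b with hgdef
    have hg : g ≠ 0 := sub_ne_zero.mpr (fun h => hab (hΦinj h))
    have hdeg : g.degree < (m : ℕ) :=
      lt_of_le_of_lt (Polynomial.degree_sub_le _ _) (max_lt (hΦdeg a) (hΦdeg b))
    have hnd : g.natDegree < m := (Polynomial.natDegree_lt_iff_degree_lt hg).mpr hdeg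
    classical
    set E := Finset.univ.filter (fun x : ↥A => (Φ a).eval (x : F) = (Φ b).eval (x : F)) with hE
    have hEcard : E.card ≤ g.natDegree := by
      refine le_trans ?_ (le_trans (Multiset.toFinset_card_le g.roots)
        (Polynomial.card_roots' g))
      refine Finset.card_le_card_of_injOn (fun x => (x : F)) ?_ ?_
      · intro x hx
        rw [Finset.mem_coe, Finset.mem_filter] at hx
        rw [Finset.mem_coe, Multiset.mem_toFinset, Polynomial.mem_roots hg]
        simp [Polynomial.IsRoot, hgdef, sub_eq_zero, hx.2]
      · intro x _ y _ h
        exact Subtype.ext h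
    have hsplit : E.card + (Finset.univ.filter
        (fun x : ↥A => ¬ ((Φ a).eval (x : F) = (Φ b).eval (x : F)))).card
        = Fintype.card ↥A := by
      rw [hE]
      rw [Finset.card_filter_add_card_filter_not]
      exact Finset.card_univ
    have hdist : hammingDist (fun α : ↥A => (Φ a).eval (α : F))
        (fun α : ↥A => (Φ b).eval (α : F)) = (Finset.univ.filter
        (fun x : ↥A => ¬ ((Φ a).eval (x : F) = (Φ b).eval (x : F)))).card := by
      rfl
    have hcardA : Fintype.card ↥A = n := by rw [Fintype.card_coe, hA]
    rw [hdist]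
    omega
  · intro α hα
    rw [← hBunion] at hα
    obtain ⟨i, _, hi⟩ := Finset.mem_biUnion.mp hα
    rw [hBunion, ← hB'union] at hα
    obtain ⟨j, _, hj⟩ := Finset.mem_biUnion.mp hα
    refine ⟨i, j, hi, hj, ?_, ?_, ?_, ?_, ?_⟩
    · rw [Finset.disjoint_left]
      intro β hβ hβ'
      have hβne : β ≠ α := Finset.ne_of_mem_erase hβ
      have h2 : ({α, β} : Finset F) ⊆ B i ∩ B' j := by
        intro x hx
        rcases Finset.mem_insert.mp hx with rfl | hx
        · exact Finset.mem_inter.mpr ⟨hi, hj⟩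
        · rw [Finset.mem_singleton] at hx
          subst hx
          exact Finset.mem_inter.mpr ⟨Finset.mem_of_mem_erase hβ, Finset.mem_of_mem_erase hβ'⟩
      have := Finset.card_le_card h2
      rw [Finset.card_insert_of_notMem (by simp [Ne.symm hβne]), Finset.card_singleton] at this
      have := le_trans this (horth i j)
      omega
    · rw [Finset.card_erase_of_mem hi, hBcard]; omega
    · rw [Finset.card_erase_of_mem hj, hB'card]; omega
    · intro a b hagree
      exact my_recover r (B i) (hBcard i) α hi (Φ a) (Φ b) (hloc1 a i) (hloc1 b i) hagree
    · intro a b hagree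
      exact my_recover s (B' j) (hB'card j) α hj (Φ a) (Φ b) (hloc2 a j) (hloc2 b j) hagree
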